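/- For every r > 0 and every ε > 0 there exists R > 0 such that for each point (x,y,z) ∈ ℂ³ with x·y = P(z) and max{|x|,|y|} ≥ R, the Gaussian measure of the set {t ∈ ℂ : |η_t(x,y,z)| < r} is less than ε. -/

import Mathlib

open MeasureTheory Polynomial

open Metric

open scoped ENNReal NNReal

noncomputable abbrev cabs : AbsoluteValue ℂ ℝ := NormedField.toAbsoluteValue ℂ

/-- The standard Gaussian probability measure on ℂ ≅ ℝ²:
    γ(U) = (1/(2π)) ∫_U e^{−|w|²/2} dλ(w). -/
noncomputable def gaussianMeasureC : Measure ℂ :=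
  MeasureTheory.volume.withDensity
    (fun w => ENNReal.ofReal ((2 * Real.pi)⁻¹ * Real.exp (-(‖w‖) ^ 2 / 2)))

lemma gaussDensity_le (w : ℂ) :
    ENNReal.ofReal ((2 * Real.pi)⁻¹ * Real.exp (-(cabs w) ^ 2 / 2))
      ≤ ENNReal.ofReal (2 * Real.pi)⁻¹ := by
  apply ENNReal.ofReal_le_ofReal
  have h1 : Real.exp (-(cabs w) ^ 2 / 2) ≤ 1 := by
    rw [Real.exp_le_one_iff]
    have : (0:ℝ) ≤ (cabs w) ^ 2 := sq_nonneg _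
    linarith
  have h2 : (0:ℝ) ≤ (2 * Real.pi)⁻¹ := by positivity
  calc (2 * Real.pi)⁻¹ * Real.exp (-(cabs w) ^ 2 / 2)
      ≤ (2 * Real.pi)⁻¹ * 1 := by nlinarith [Real.exp_pos (-(cabs w) ^ 2 / 2)]
    _ = (2 * Real.pi)⁻¹ := mul_one _

lemma gauss_le_vol {S : Set ℂ} (hS : MeasurableSet S) :
    gaussianMeasureC S ≤ ENNReal.ofReal (2 * Real.pi)⁻¹ * volume S := by
  rw [gaussianMeasureC, withDensity_apply _ hS]
  calc ∫⁻ w in S, ENNReal.ofReal ((2 * Real.pi)⁻¹ * Real.exp (-(cabs w) ^ 2 / 2))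
      ≤ ∫⁻ _ in S, ENNReal.ofReal (2 * Real.pi)⁻¹ := lintegral_mono fun w => gaussDensity_le w
    _ = ENNReal.ofReal (2 * Real.pi)⁻¹ * volume S := by rw [setLIntegral_const]

lemma gauss_ball_le (c : ℂ) {ρ : ℝ} (hρ : 0 ≤ ρ) :
    gaussianMeasureC (ball c ρ) ≤ ENNReal.ofReal (ρ ^ 2 / 2) := by
  calc gaussianMeasureC (ball c ρ)
      ≤ ENNReal.ofReal (2 * Real.pi)⁻¹ * volume (ball c ρ) := gauss_le_vol measurableSet_ball
    _ = ENNReal.ofReal (2 * Real.pi)⁻¹ * (ENNReal.ofReal ρ ^ 2 * NNReal.pi) := by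
        rw [Complex.volume_ball]
    _ = ENNReal.ofReal (ρ ^ 2 / 2) := by
        rw [← ENNReal.ofReal_pow hρ, ← ENNReal.ofReal_coe_nnreal]
        rw [← ENNReal.ofReal_mul (by positivity), ← ENNReal.ofReal_mul (by positivity)]
        congr 1
        rw [NNReal.coe_real_pi]
        have hπ : Real.pi ≠ 0 := Real.pi_ne_zero
        field_simp

instance gauss_finite : IsFiniteMeasure gaussianMeasureC := by
  constructor
  rw [gaussianMeasureC, withDensity_apply _ MeasurableSet.univ, Measure.restrict_univ]
  have hint : Integrable (fun w : ℂ => (2 * Real.pi)⁻¹ * Real.exp (-(‖w‖) ^ 2 / 2)) := by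
    apply Integrable.const_mul
    have h1 : Integrable (fun p : ℝ × ℝ =>
        Real.exp (-(2:ℝ)⁻¹ * p.1 ^ 2) * Real.exp (-(2:ℝ)⁻¹ * p.2 ^ 2)) := by
      have hg : Integrable (fun x : ℝ => Real.exp (-(2:ℝ)⁻¹ * x ^ 2)) :=
        integrable_exp_neg_mul_sq (by norm_num)
      exact hg.mul_prod hg
    have h2 := (Complex.volume_preserving_equiv_real_prod.integrable_comp_emb
      Complex.measurableEquivRealProd.measurableEmbedding).mpr h1
    convert h2 using 1
    · rfl
    funext w
    simp only [Function.comp_apply, Complex.measurableEquivRealProd_apply]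
    rw [← Real.exp_add, Complex.sq_norm, Complex.normSq_apply]
    congr 1
    ring
  exact Integrable.lintegral_lt_top hint

lemma gauss_tail (δ : ℝ) (hδ : 0 < δ) :
    ∃ B : ℝ, 1 ≤ B ∧ gaussianMeasureC {t : ℂ | B ≤ cabs t} < ENNReal.ofReal δ := by
  set s : ℕ → Set ℂ := fun n => {t : ℂ | (n : ℝ) ≤ cabs t} with hs
  have hmeas : ∀ n, MeasurableSet (s n) := fun n =>
    (isClosed_le continuous_const continuous_norm).measurableSet
  have hanti : Antitone s := by
    intro m n h t ht
    simp only [hs, Set.mem_setOf_eq] at ht ⊢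
    exact le_trans (Nat.cast_le.mpr h) ht
  have hempty : ⋂ n, s n = ∅ := by
    ext t
    simp only [Set.mem_iInter, Set.mem_empty_iff_false, iff_false, not_forall]
    obtain ⟨n, hn⟩ := exists_nat_gt (cabs t)
    exact ⟨n, by simp only [hs, Set.mem_setOf_eq, not_le]; exact hn⟩
  have htend := tendsto_measure_iInter_atTop (μ := gaussianMeasureC)
    (fun n => (hmeas n).nullMeasurableSet) hanti ⟨0, measure_ne_top _ _⟩
  rw [hempty, measure_empty] at htend
  have hev : ∀ᶠ n in Filter.atTop, gaussianMeasureC (s n) < ENNReal.ofReal δ := by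
    have := htend.eventually_lt_const (ENNReal.ofReal_pos.mpr hδ)
    exact this
  obtain ⟨n, hn⟩ := hev.exists
  refine ⟨max 1 n, le_max_left _ _, lt_of_le_of_lt ?_ hn⟩
  apply measure_mono
  intro t ht
  exact le_trans (le_max_right (1:ℝ) n) ht

-- multiset product helpers over ℝ
lemma msprod_nonneg {s : Multiset ℂ} {f : ℂ → ℝ} (h : ∀ w ∈ s, 0 ≤ f w) :
    0 ≤ (s.map f).prod := by
  induction s using Multiset.induction_on with
  | empty => simp
  | cons a s ih =>
    rw [Multiset.map_cons, Multiset.prod_cons]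
    exact mul_nonneg (h a (Multiset.mem_cons_self a s))
      (ih fun w hw => h w (Multiset.mem_cons_of_mem hw))

lemma msprod_le_msprod {s : Multiset ℂ} {f g : ℂ → ℝ} (h0 : ∀ w ∈ s, 0 ≤ f w)
    (h : ∀ w ∈ s, f w ≤ g w) : (s.map f).prod ≤ (s.map g).prod := by
  induction s using Multiset.induction_on with
  | empty => simp
  | cons a s ih =>
    rw [Multiset.map_cons, Multiset.prod_cons, Multiset.map_cons, Multiset.prod_cons]
    have hfa := h0 a (Multiset.mem_cons_self a s)
    have hprod0 : 0 ≤ (s.map f).prod :=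
      msprod_nonneg (fun w hw => h0 w (Multiset.mem_cons_of_mem hw))
    exact mul_le_mul (h a (Multiset.mem_cons_self a s))
      (ih (fun w hw => h0 w (Multiset.mem_cons_of_mem hw))
          (fun w hw => h w (Multiset.mem_cons_of_mem hw)))
      hprod0 (le_trans hfa (h a (Multiset.mem_cons_self a s)))

lemma pow_le_msprod {s : Multiset ℂ} {f : ℂ → ℝ} {c : ℝ} (hc : 0 ≤ c)
    (h : ∀ w ∈ s, c ≤ f w) : c ^ Multiset.card s ≤ (s.map f).prod := by
  induction s using Multiset.induction_on with
  | empty => simp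
  | cons a s ih =>
    rw [Multiset.map_cons, Multiset.prod_cons, Multiset.card_cons, pow_succ, mul_comm]
    exact mul_le_mul (h a (Multiset.mem_cons_self a s))
      (ih fun w hw => h w (Multiset.mem_cons_of_mem hw)) (pow_nonneg hc _)
      (le_trans hc (h a (Multiset.mem_cons_self a s)))

lemma msprod_le_pow {s : Multiset ℂ} {f : ℂ → ℝ} {c : ℝ}
    (h0 : ∀ w ∈ s, 0 ≤ f w) (h : ∀ w ∈ s, f w ≤ c) :
    (s.map f).prod ≤ c ^ Multiset.card s := by
  induction s using Multiset.induction_on with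
  | empty => simp
  | cons a s ih =>
    rw [Multiset.map_cons, Multiset.prod_cons, Multiset.card_cons, pow_succ']
    have hc : 0 ≤ c := le_trans (h0 a (Multiset.mem_cons_self a s)) (h a (Multiset.mem_cons_self a s))
    exact mul_le_mul (h a (Multiset.mem_cons_self a s))
      (ih (fun w hw => h0 w (Multiset.mem_cons_of_mem hw))
          (fun w hw => h w (Multiset.mem_cons_of_mem hw)))
      (msprod_nonneg fun w hw => h0 w (Multiset.mem_cons_of_mem hw)) hc

/-- In any commutative monoid: ∏ (c * f w) = c ^ card * ∏ f w. -/
lemma msprod_const_mul {M : Type*} [CommMonoid M] (s : Multiset ℂ) (f : ℂ → M) (c : M) :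
    (s.map fun w => c * f w).prod = c ^ Multiset.card s * (s.map f).prod := by
  induction s using Multiset.induction_on with
  | empty => simp
  | cons a s ih =>
    rw [Multiset.map_cons, Multiset.prod_cons, Multiset.map_cons, Multiset.prod_cons,
      Multiset.card_cons, ih, pow_succ]
    ac_rfl
/-- The ρ used in the covering arguments: 0 < ρ ≤ 1 and ρ² ≤ c. -/
lemma exists_rho (c : ℝ) (hc : 0 < c) : ∃ ρ : ℝ, 0 < ρ ∧ ρ ≤ 1 ∧ ρ ^ 2 ≤ c := by
  refine ⟨min 1 (Real.sqrt c), lt_min one_pos (Real.sqrt_pos.mpr hc), min_le_left _ _, ?_⟩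
  calc (min 1 (Real.sqrt c)) ^ 2 ≤ (Real.sqrt c) ^ 2 :=
        pow_le_pow_left₀ (le_min zero_le_one (Real.sqrt_nonneg c)) (min_le_right _ _) 2
    _ = c := Real.sq_sqrt hc.le

/-- Covering bound: the gaussian measure of a union of balls of radius ρ indexed by
a multiset of cardinality ≤ n. -/
lemma gauss_balls_le (s : Multiset ℂ) (n : ℕ) (hn : Multiset.card s ≤ n) {ρ : ℝ} (hρ : 0 ≤ ρ) :
    gaussianMeasureC (⋃ w ∈ s.toFinset, ball w ρ) ≤ ENNReal.ofReal ((n : ℝ) * (ρ ^ 2 / 2)) := by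
  calc gaussianMeasureC (⋃ w ∈ s.toFinset, ball w ρ)
      ≤ ∑ w ∈ s.toFinset, gaussianMeasureC (ball w ρ) := measure_biUnion_finset_le _ _
    _ ≤ ∑ _w ∈ s.toFinset, ENNReal.ofReal (ρ ^ 2 / 2) :=
        Finset.sum_le_sum fun w _ => gauss_ball_le w hρ
    _ = (s.toFinset.card : ℝ≥0∞) * ENNReal.ofReal (ρ ^ 2 / 2) := by
        rw [Finset.sum_const, nsmul_eq_mul]
    _ ≤ (n : ℝ≥0∞) * ENNReal.ofReal (ρ ^ 2 / 2) := by
        apply mul_le_mul_left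
        exact_mod_cast le_trans s.toFinset_card_le hn
    _ = ENNReal.ofReal ((n : ℝ) * (ρ ^ 2 / 2)) := by
        rw [ENNReal.ofReal_mul (by positivity), ENNReal.ofReal_natCast]

/-- Lemma B : if the "leading coefficient" a is large, the sublevel set has small measure. -/
lemma lemB (n : ℕ) (r ε : ℝ) (hr : 0 < r) (hε : 0 < ε) :
    ∃ A : ℝ, 0 < A ∧ ∀ a : ℝ, A ≤ a → ∀ s : Multiset ℂ, Multiset.card s = n →
      gaussianMeasureC {t : ℂ | a * ((s.map fun w => cabs (t - w)).prod) < r}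
        < ENNReal.ofReal ε := by
  obtain ⟨ρ, hρ0, hρ1, hρsq⟩ := exists_rho (ε / (2 * (n + 1))) (by positivity)
  refine ⟨r / ρ ^ n, by positivity, ?_⟩
  intro a ha s hcard
  have ha0 : 0 < a := lt_of_lt_of_le (by positivity) ha
  have hsub : {t : ℂ | a * ((s.map fun w => cabs (t - w)).prod) < r}
      ⊆ ⋃ w ∈ s.toFinset, ball w ρ := by
    intro t ht
    simp only [Set.mem_setOf_eq] at ht
    have hlt : ((s.map fun w => cabs (t - w)).prod) < ρ ^ n := by
      by_contra hcon
      push_neg at hcon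
      have : r ≤ a * ((s.map fun w => cabs (t - w)).prod) := by
        calc r = (r / ρ ^ n) * ρ ^ n := by field_simp
          _ ≤ a * ρ ^ n := by
              apply mul_le_mul_of_nonneg_right ha (by positivity)
          _ ≤ a * ((s.map fun w => cabs (t - w)).prod) :=
              mul_le_mul_of_nonneg_left hcon ha0.le
      linarith
    obtain ⟨w, hw, hwlt⟩ : ∃ w ∈ s, cabs (t - w) < ρ := by
      by_contra hcon
      push_neg at hcon
      have := pow_le_msprod (s := s) (f := fun w => cabs (t - w)) hρ0.le hcon
      rw [hcard] at this
      linarith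
    refine Set.mem_biUnion (Multiset.mem_toFinset.mpr hw) ?_
    rw [mem_ball, Complex.dist_eq]
    exact hwlt
  calc gaussianMeasureC {t : ℂ | a * ((s.map fun w => cabs (t - w)).prod) < r}
      ≤ gaussianMeasureC (⋃ w ∈ s.toFinset, ball w ρ) := measure_mono hsub
    _ ≤ ENNReal.ofReal ((n : ℝ) * (ρ ^ 2 / 2)) := gauss_balls_le s n hcard.le hρ0.le
    _ < ENNReal.ofReal ε := by
        apply (ENNReal.ofReal_lt_ofReal_iff hε).mpr
        have hρsq' : ρ ^ 2 * (2 * ((n : ℝ) + 1)) ≤ ε := by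
          rw [le_div_iff₀ (by positivity)] at hρsq
          exact hρsq
        nlinarith [mul_pos hρ0 hρ0, Nat.cast_nonneg (α := ℝ) n, sq_nonneg ρ]
/-- Lemma A : if |f(0)| = a·∏|sᵢ| is large, the sublevel set of a·∏|t−sᵢ| has small measure. -/
lemma lemA (n : ℕ) (r ε : ℝ) (hr : 0 < r) (hε : 0 < ε) :
    ∃ R : ℝ, 0 < R ∧ ∀ a : ℝ, 0 < a → ∀ s : Multiset ℂ, Multiset.card s = n →
      R ≤ a * ((s.map cabs).prod) →
      gaussianMeasureC {t : ℂ | a * ((s.map fun w => cabs (t - w)).prod) < r}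
        < ENNReal.ofReal ε := by
  obtain ⟨B, hB1, hBtail⟩ := gauss_tail (ε / 2) (half_pos hε)
  have hB0 : (0:ℝ) < B := lt_of_lt_of_le one_pos hB1
  obtain ⟨ρ, hρ0, hρ1, hρsq⟩ := exists_rho (ε / (4 * (n + 1))) (by positivity)
  refine ⟨r * (4 * B / ρ) ^ n, by positivity, ?_⟩
  intro a ha s hcard hR
  set T := {t : ℂ | a * ((s.map fun w => cabs (t - w)).prod) < r} with hT
  set L : Multiset ℂ := s.filter (fun w => 2 * B ≤ cabs w) with hL
  set Sm : Multiset ℂ := s.filter (fun w => ¬ (2 * B ≤ cabs w)) with hSm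
  have hsplit : L + Sm = s := Multiset.filter_add_not _ s
  set l : ℕ := Multiset.card L with hl
  set m : ℕ := Multiset.card Sm with hm
  have hlm : l + m = n := by
    rw [hl, hm, ← Multiset.card_add, hsplit, hcard]
  have hmemL : ∀ w ∈ L, 2 * B ≤ cabs w := fun w hw => (Multiset.mem_filter.mp hw).2
  have hmemSm : ∀ w ∈ Sm, cabs w < 2 * B := by
    intro w hw
    have := (Multiset.mem_filter.mp hw).2
    simpa using this
  -- the cover
  have hsub : T ⊆ {t : ℂ | B ≤ cabs t} ∪ ⋃ w ∈ Sm.toFinset, Metric.ball w ρ := by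
    intro t ht
    by_cases htB : B ≤ cabs t
    · exact Or.inl htB
    push_neg at htB
    right
    simp only [hT, Set.mem_setOf_eq] at ht
    have hprodsplit : ∀ f : ℂ → ℝ, (s.map f).prod = (L.map f).prod * (Sm.map f).prod := by
      intro f
      rw [← hsplit, Multiset.map_add, Multiset.prod_add]
    set PL : ℝ := (L.map fun w => cabs (t - w)).prod with hPL
    set PS : ℝ := (Sm.map fun w => cabs (t - w)).prod with hPS
    set QL : ℝ := (L.map cabs).prod with hQL
    set QS : ℝ := (Sm.map cabs).prod with hQS
    have hrev : ∀ w : ℂ, cabs w - cabs t ≤ cabs (t - w) := by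
      intro w
      show ‖w‖ - ‖t‖ ≤ ‖t - w‖; rw [norm_sub_rev]
      exact norm_sub_norm_le w t
    have hLlow : ∀ w ∈ L, cabs w / 2 ≤ cabs (t - w) := by
      intro w hw
      have h1 : 2 * B ≤ cabs w := hmemL w hw
      have h2 := hrev w
      linarith
    have hLB : ∀ w ∈ L, B ≤ cabs (t - w) := by
      intro w hw
      have h1 : 2 * B ≤ cabs w := hmemL w hw
      have h2 := hrev w
      linarith
    have hPLpos : (0:ℝ) < PL := by
      have := pow_le_msprod (s := L) (f := fun w => cabs (t - w)) hB0.le hLB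
      calc (0:ℝ) < B ^ l := by positivity
        _ ≤ PL := this
    have hPSnn : (0:ℝ) ≤ PS := msprod_nonneg fun w _ => AbsoluteValue.nonneg _ _
    have hQLnn : (0:ℝ) ≤ QL := msprod_nonneg fun w _ => AbsoluteValue.nonneg _ _
    have hQSnn : (0:ℝ) ≤ QS := msprod_nonneg fun w _ => AbsoluteValue.nonneg _ _
    have hQSle : QS ≤ (2 * B) ^ m :=
      msprod_le_pow (fun w _ => AbsoluteValue.nonneg _ _) (fun w hw => (hmemSm w hw).le)
    have hQLle : QL ≤ PL * 2 ^ l := by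
      have h1 : QL ≤ (L.map fun w => 2 * cabs (t - w)).prod :=
        msprod_le_msprod (fun w _ => AbsoluteValue.nonneg _ _)
          (fun w hw => by have := hLlow w hw; linarith)
      have h2 : (L.map fun w => 2 * cabs (t - w)).prod = 2 ^ l * PL :=
        msprod_const_mul L _ 2
      rw [h2] at h1
      linarith
    -- main chain : r ≤ a * PL * ρ^m
    have key : r ≤ a * PL * ρ ^ m := by
      have step4 : r * (4 * B / ρ) ^ n ≤ a * PL * (2 ^ l * (2 * B) ^ m) := by
        have step1 : r * (4 * B / ρ) ^ n ≤ a * (QL * QS) := by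
          rw [hprodsplit cabs] at hR
          exact hR
        have step2 : a * (QL * QS) ≤ a * QL * (2 * B) ^ m := by
          rw [mul_assoc]
          exact mul_le_mul_of_nonneg_left (mul_le_mul_of_nonneg_left hQSle hQLnn) ha.le
        have step3 : a * QL * (2 * B) ^ m ≤ a * (PL * 2 ^ l) * (2 * B) ^ m := by
          apply mul_le_mul_of_nonneg_right _ (by positivity)
          exact mul_le_mul_of_nonneg_left hQLle ha.le
        calc r * (4 * B / ρ) ^ n ≤ a * (PL * 2 ^ l) * (2 * B) ^ m :=
              le_trans step1 (le_trans step2 step3)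
          _ = a * PL * (2 ^ l * (2 * B) ^ m) := by ring
      have hρpow : 2 ^ l * (2 * B) ^ m ≤ ρ ^ m * (4 * B / ρ) ^ n := by
        have h4B : (2:ℝ) ≤ 4 * B / ρ := by
          rw [le_div_iff₀ hρ0]
          nlinarith
        have e1 : ρ ^ m * (4 * B / ρ) ^ n = (4 * B / ρ) ^ l * (4 * B) ^ m := by
          rw [← hlm, pow_add]
          have e2 : ρ ^ m * (4 * B / ρ) ^ m = (4 * B) ^ m := by
            rw [← mul_pow]
            congr 1
            field_simp
          calc ρ ^ m * ((4 * B / ρ) ^ l * (4 * B / ρ) ^ m)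
              = (4 * B / ρ) ^ l * (ρ ^ m * (4 * B / ρ) ^ m) := by ring
            _ = (4 * B / ρ) ^ l * (4 * B) ^ m := by rw [e2]
        rw [e1]
        apply mul_le_mul
        · exact pow_le_pow_left₀ (by norm_num) h4B l
        · exact pow_le_pow_left₀ (by positivity) (by linarith) m
        · positivity
        · positivity
      have step5 : a * PL * (2 ^ l * (2 * B) ^ m) ≤ (a * PL * ρ ^ m) * (4 * B / ρ) ^ n := by
        calc a * PL * (2 ^ l * (2 * B) ^ m) ≤ a * PL * (ρ ^ m * (4 * B / ρ) ^ n) :=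
              mul_le_mul_of_nonneg_left hρpow (by positivity)
          _ = (a * PL * ρ ^ m) * (4 * B / ρ) ^ n := by ring
      have hDpos : (0:ℝ) < (4 * B / ρ) ^ n := by positivity
      have := le_trans step4 step5
      exact le_of_mul_le_mul_right this hDpos
    -- conclude PS < ρ^m
    have hPSlt : PS < ρ ^ m := by
      have hlt : a * PL * PS < r := by
        have h := ht
        rw [hprodsplit (fun w => cabs (t - w))] at h
        calc a * PL * PS = a * (PL * PS) := by ring
          _ < r := h
      have hchain : (a * PL) * PS < (a * PL) * ρ ^ m := by
        calc (a * PL) * PS = a * PL * PS := by ring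
          _ < r := hlt
          _ ≤ a * PL * ρ ^ m := key
      exact lt_of_mul_lt_mul_left hchain (by positivity)
    obtain ⟨w, hw, hwlt⟩ : ∃ w ∈ Sm, cabs (t - w) < ρ := by
      by_contra hcon
      push_neg at hcon
      have := pow_le_msprod (s := Sm) (f := fun w => cabs (t - w)) hρ0.le hcon
      rw [← hm] at this
      linarith
    refine Set.mem_biUnion (Multiset.mem_toFinset.mpr hw) ?_
    rw [Metric.mem_ball, Complex.dist_eq]
    exact hwlt
  -- measure estimate
  calc gaussianMeasureC T
      ≤ gaussianMeasureC ({t : ℂ | B ≤ cabs t} ∪ ⋃ w ∈ Sm.toFinset, Metric.ball w ρ) :=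
        measure_mono hsub
    _ ≤ gaussianMeasureC {t : ℂ | B ≤ cabs t}
          + gaussianMeasureC (⋃ w ∈ Sm.toFinset, Metric.ball w ρ) := measure_union_le _ _
    _ ≤ gaussianMeasureC {t : ℂ | B ≤ cabs t} + ENNReal.ofReal ((n:ℝ) * (ρ ^ 2 / 2)) := by
        apply add_le_add_right
        apply gauss_balls_le Sm n _ hρ0.le
        calc Multiset.card Sm ≤ Multiset.card s := Multiset.card_le_card (Multiset.filter_le _ s)
          _ = n := hcard
    _ < ENNReal.ofReal (ε / 2) + ENNReal.ofReal ((n:ℝ) * (ρ ^ 2 / 2)) :=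
        ENNReal.add_lt_add_right ENNReal.ofReal_ne_top hBtail
    _ = ENNReal.ofReal (ε / 2 + (n:ℝ) * (ρ ^ 2 / 2)) := by
        rw [ENNReal.ofReal_add (by positivity) (by positivity)]
    _ ≤ ENNReal.ofReal ε := by
        apply ENNReal.ofReal_le_ofReal
        have hρsq' : ρ ^ 2 * (4 * ((n : ℝ) + 1)) ≤ ε := by
          rw [le_div_iff₀ (by positivity)] at hρsq
          exact hρsq
        nlinarith [mul_pos hρ0 hρ0, Nat.cast_nonneg (α := ℝ) n]
/-- abs of a multiset product. -/
lemma abs_msprod (u : Multiset ℂ) : cabs u.prod = (u.map cabs).prod := by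
  induction u using Multiset.induction_on with
  | empty => simp
  | cons a u ih => rw [Multiset.map_cons, Multiset.prod_cons, Multiset.prod_cons, map_mul, ih]

lemma habs_comm (a b : ℂ) : cabs (a - b) = cabs (b - a) := by
  show ‖a - b‖ = ‖b - a‖; rw [norm_sub_rev]

/-- η_t(x,y,z) = (1/y)·P(z+yt) if y ≠ 0, and x + t·P′(z) if y = 0. -/
noncomputable def eta (P : Polynomial ℂ) (t x y z : ℂ) : ℂ :=
  if y ≠ 0 then y⁻¹ * P.eval (z + y * t) else x + t * (Polynomial.derivative P).eval z

theorem stmt0 (P : Polynomial ℂ) (hdeg : 2 ≤ P.natDegree)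
    (hsq : ∀ z : ℂ, ¬(P.eval z = 0 ∧ (Polynomial.derivative P).eval z = 0)) :
    ∀ r : ℝ, 0 < r → ∀ ε : ℝ, 0 < ε → ∃ R : ℝ, 0 < R ∧
      ∀ x y z : ℂ, x * y = P.eval z → R ≤ max (‖x‖) (‖y‖) →
        gaussianMeasureC {t : ℂ | ‖eta P t x y z‖ < r} < ENNReal.ofReal ε := by
  intro r hr ε hε
  show ∃ R : ℝ, 0 < R ∧ ∀ x y z : ℂ, x * y = P.eval z → R ≤ max (cabs x) (cabs y) →
    gaussianMeasureC {t : ℂ | cabs (eta P t x y z) < r} < ENNReal.ofReal ε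
  have hP0 : P ≠ 0 := fun h => by simp [h] at hdeg
  have hlc0 : P.leadingCoeff ≠ 0 := leadingCoeff_ne_zero.mpr hP0
  have hlc : 0 < cabs P.leadingCoeff := AbsoluteValue.pos _ hlc0
  obtain ⟨e, he⟩ : ∃ e : ℕ, P.natDegree = e + 1 := ⟨P.natDegree - 1, by omega⟩
  have hsplits : Splits P := IsAlgClosed.splits P
  have hroots_card : Multiset.card P.roots = P.natDegree := by
    have h := hsplits.natDegree_eq_card_roots
    omega
  obtain ⟨R1, hR1pos, hA1⟩ := lemA 1 r ε hr hε
  obtain ⟨Rd, hRdpos, hAd⟩ := lemA P.natDegree r ε hr hε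
  obtain ⟨A, hApos, hlB⟩ := lemB P.natDegree r ε hr hε
  set lc : ℝ := cabs P.leadingCoeff with hlcdef
  refine ⟨max (max R1 Rd) (max 1 (A / lc)), lt_of_lt_of_le hR1pos ((le_max_left _ _).trans (le_max_left _ _)), ?_⟩
  intro x y z hxy hmax
  by_cases hy : y = 0
  · -- linear case : y = 0
    have hymax : cabs y = 0 := by rw [hy]; simp
    have hxR : max (max R1 Rd) (max 1 (A / lc)) ≤ cabs x := by
      have hmx : max (cabs x) (cabs y) = cabs x := by
        rw [hymax]
        exact max_eq_left (AbsoluteValue.nonneg _ _)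
      rwa [hmx] at hmax
    have hPz : P.eval z = 0 := by rw [← hxy, hy, mul_zero]
    have hPz' : (Polynomial.derivative P).eval z ≠ 0 := fun h => hsq z ⟨hPz, h⟩
    set c : ℂ := (Polynomial.derivative P).eval z with hc
    have hc0 : 0 < cabs c := AbsoluteValue.pos _ hPz'
    have heta : ∀ t : ℂ, cabs (eta P t x y z)
        = cabs c * ((({-(x * c⁻¹)} : Multiset ℂ).map fun w => cabs (t - w)).prod) := by
      intro t
      rw [_root_.eta, if_neg (not_not.mpr hy)]
      rw [Multiset.map_singleton, Multiset.prod_singleton]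
      rw [← map_mul]
      congr 1
      field_simp
      ring
    have hTeq : {t : ℂ | cabs (eta P t x y z) < r}
        = {t : ℂ | cabs c * ((({-(x * c⁻¹)} : Multiset ℂ).map fun w => cabs (t - w)).prod) < r} := by
      ext t
      simp only [Set.mem_setOf_eq, heta t]
    rw [hTeq]
    apply hA1 (cabs c) hc0 _ (Multiset.card_singleton _)
    rw [Multiset.map_singleton, Multiset.prod_singleton]
    have : cabs c * cabs (-(x * c⁻¹)) = cabs x := by
      rw [AbsoluteValue.map_neg, map_mul, map_inv₀]
      field_simp
    rw [this]
    exact le_trans ((le_max_left R1 Rd).trans (le_max_left _ _)) hxR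
  · -- y ≠ 0
    have hy0 : 0 < cabs y := AbsoluteValue.pos _ hy
    set g : ℂ → ℂ := fun w => (w - z) * y⁻¹ with hg
    set s : Multiset ℂ := P.roots.map g with hs
    have hcard : Multiset.card s = P.natDegree := by rw [hs, Multiset.card_map, hroots_card]
    set ay : ℝ := lc * (cabs y) ^ e with hay
    have hay0 : 0 < ay := by positivity
    have heval : ∀ v : ℂ, P.eval v = P.leadingCoeff * (P.roots.map fun a => v - a).prod :=
      fun v => hsplits.eval_eq_prod_roots v
    -- identity for eta
    have heta : ∀ t : ℂ, cabs (eta P t x y z)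
        = ay * ((s.map fun w => cabs (t - w)).prod) := by
      intro t
      rw [_root_.eta, if_pos hy, heval (z + y * t)]
      have hmapeq : (P.roots.map fun a => z + y * t - a)
          = P.roots.map fun a => y * (t - g a) := by
        apply Multiset.map_congr rfl
        intro a _
        rw [hg]
        field_simp
        ring
      rw [hmapeq, msprod_const_mul P.roots (fun a => t - g a) y]
      rw [map_mul, map_mul, map_mul, map_inv₀, map_pow, hroots_card, he]
      rw [abs_msprod, Multiset.map_map]
      have hms : (s.map fun w => cabs (t - w))
          = P.roots.map (cabs ∘ fun a => t - g a) := by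
        rw [hs, Multiset.map_map]
        rfl
      rw [hms, hay, hlcdef]
      have hynz : cabs y ≠ 0 := hy0.ne'
      rw [pow_succ]
      field_simp
    -- identity for the constant term
    have hconst : ay * ((s.map cabs).prod) = cabs x := by
      have habsxy : cabs x * cabs y = lc * ((P.roots.map fun a => cabs (a - z)).prod) := by
        rw [← map_mul, hxy, heval z, map_mul, abs_msprod, Multiset.map_map, hlcdef]
        congr 1
        apply congrArg Multiset.prod
        apply Multiset.map_congr rfl
        intro a _
        simp only [Function.comp_apply]
        exact habs_comm z a
      have hsabs : (s.map cabs).prod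
          = ((cabs y)⁻¹) ^ (e + 1) * ((P.roots.map fun a => cabs (a - z)).prod) := by
        rw [hs, Multiset.map_map]
        have : (P.roots.map (cabs ∘ g))
            = P.roots.map fun a => (cabs y)⁻¹ * cabs (a - z) := by
          apply Multiset.map_congr rfl
          intro a _
          simp only [Function.comp_apply, hg, map_mul, map_inv₀]
          ring
        rw [this, msprod_const_mul P.roots (fun a => cabs (a - z)) ((cabs y)⁻¹),
          hroots_card, he]
      apply mul_right_cancel₀ hy0.ne'
      rw [hsabs, habsxy, hay]
      have hynz : cabs y ≠ 0 := hy0.ne'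
      rw [pow_succ, inv_pow]
      field_simp
    have hTeq : {t : ℂ | cabs (eta P t x y z) < r}
        = {t : ℂ | ay * ((s.map fun w => cabs (t - w)).prod) < r} := by
      ext t
      simp only [Set.mem_setOf_eq, heta t]
    rw [hTeq]
    rcases le_max_iff.mp hmax with hx | hyR
    · apply hAd ay hay0 s hcard
      rw [hconst]
      exact le_trans ((le_max_right R1 Rd).trans (le_max_left _ _)) hx
    · apply hlB ay _ s hcard
      have h1 : (1:ℝ) ≤ cabs y :=
        le_trans ((le_max_left 1 (A / lc)).trans (le_max_right _ _)) hyR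
      have h2 : A / lc ≤ cabs y :=
        le_trans ((le_max_right 1 (A / lc)).trans (le_max_right _ _)) hyR
      have h3 : cabs y ≤ (cabs y) ^ e := le_self_pow₀ h1 (by omega)
      calc A = lc * (A / lc) := by field_simp
        _ ≤ lc * cabs y := by
            apply mul_le_mul_of_nonneg_left h2 hlc.le
        _ ≤ lc * (cabs y) ^ e := by
            apply mul_le_mul_of_nonneg_left h3 hlc.le
        _ = ay := rfl
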